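/- Let p = 2n+1 be prime and define v_i = N_p(cos(2πi/p), sin(2πi/p), h_p) ∈ ℝ³ for i = 0,...,2n, where m satisfies π/2 ≤ 2πm/p ≤ π, h_p = √(−cos(2πm/p)), N_p = 1/√(1+|cos(2πm/p)|). Then v_i ⊥ v_j whenever i − j ≡ ±m (mod p), and any three distinct v_i are linearly independent. -/

import Mathlib

private lemma trig_aux (u v : ℝ) : Real.sin (2*u) + Real.sin (2*v) - Real.sin (2*u + 2*v)
    = 4 * Real.sin (u+v) * Real.sin u * Real.sin v := by
  simp only [Real.sin_two_mul, Real.cos_two_mul', Real.sin_add, Real.cos_add]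
  linear_combination (-2*Real.sin u*Real.cos u) * (Real.sin_sq_add_cos_sq v)
    - (2*Real.sin v*Real.cos v) * (Real.sin_sq_add_cos_sq u)

private lemma det3_aux (N h a b c : ℝ) :
    Matrix.det (Matrix.of ![![N*Real.cos a, N*Real.sin a, N*h],
      ![N*Real.cos b, N*Real.sin b, N*h], ![N*Real.cos c, N*Real.sin c, N*h]])
    = N^3 * h * (Real.sin (b-a) + Real.sin (c-b) - Real.sin (c-a)) := by
  simp only [Matrix.det_fin_three, Matrix.of_apply, Matrix.cons_val', Matrix.cons_val_zero,
    Matrix.empty_val', Matrix.cons_val_fin_one, Matrix.cons_val_one, Matrix.head_cons,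
    Matrix.head_fin_const, Matrix.cons_val_two, Matrix.tail_cons, Matrix.head_fin_const,
    Real.sin_sub]
  ring

private lemma sin_ne_aux (p : ℕ) (hp : 0 < p) (d : ℤ) (hd : d ≠ 0) (hdp : d.natAbs < p) :
    Real.sin (Real.pi * d / p) ≠ 0 := by
  intro hs
  rw [Real.sin_eq_zero_iff] at hs
  obtain ⟨n, hn⟩ := hs
  have hp' : (p:ℝ) ≠ 0 := Nat.cast_ne_zero.2 hp.ne'
  have hπ := Real.pi_ne_zero
  have hd' : (d:ℝ) = n * p := by
    field_simp at hn
    nlinarith [hn, Real.pi_pos]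
  have : d = n * p := by exact_mod_cast hd'
  rcases eq_or_ne n 0 with h0 | h0
  · simp [h0] at this; exact hd this
  · have h2 : d.natAbs = n.natAbs * p := by rw [this, Int.natAbs_mul, Int.natAbs_natCast]
    have h3 : 0 < n.natAbs := Int.natAbs_pos.2 h0
    have h4 : p ≤ n.natAbs * p := Nat.le_mul_of_pos_left p h3
    omega

theorem stmt15 (nn p m : ℕ) (hp : p = 2 * nn + 1) (hprime : Nat.Prime p)
    (hm1 : Real.pi / 2 ≤ 2 * Real.pi * m / p) (hm2 : 2 * Real.pi * m / p ≤ Real.pi)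
    (h N : ℝ)
    (hh : h = Real.sqrt (-(Real.cos (2 * Real.pi * m / p))))
    (hN : N = 1 / Real.sqrt (1 + |Real.cos (2 * Real.pi * m / p)|))
    (v : Fin p → EuclideanSpace ℝ (Fin 3))
    (hv : ∀ i : Fin p,
      v i = ![N * Real.cos (2 * Real.pi * (i : ℕ) / p),
              N * Real.sin (2 * Real.pi * (i : ℕ) / p),
              N * h]) :
    (∀ i j : Fin p, (((i : ℕ) + m) % p = (j : ℕ) ∨ ((j : ℕ) + m) % p = (i : ℕ)) →
      (inner ℝ (v i) (v j) : ℝ) = 0) ∧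
    (∀ i j k : Fin p, i ≠ j → i ≠ k → j ≠ k →
      LinearIndependent ℝ ![v i, v j, v k]) := by
  have hppos : 0 < p := hprime.pos
  have hpR : (0:ℝ) < p := by exact_mod_cast hppos
  have hpne : (p:ℝ) ≠ 0 := hpR.ne'
  have hπpos := Real.pi_pos
  have hcos : Real.cos (2 * Real.pi * m / p) ≤ 0 :=
    Real.cos_nonpos_of_pi_div_two_le_of_le hm1 (by linarith)
  have hsq : h^2 = -Real.cos (2 * Real.pi * m / p) := by
    rw [hh, Real.sq_sqrt (by linarith)]
  -- Part 1
  have key : ∀ i j : Fin p, ((i : ℕ) + m) % p = (j : ℕ) → (inner ℝ (v i) (v j) : ℝ) = 0 := by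
    intro i j hij
    have hnat : (i:ℕ) + m = p * (((i:ℕ) + m) / p) + (j:ℕ) := by
      have := Nat.div_add_mod ((i:ℕ) + m) p; omega
    set q : ℕ := ((i:ℕ) + m) / p with hq
    have hreal : ((i:ℕ):ℝ) + m = p * q + (j:ℕ) := by exact_mod_cast hnat
    have hang : 2*Real.pi*((i:ℕ):ℝ)/p - 2*Real.pi*((j:ℕ):ℝ)/p
        = -(2 * Real.pi * m / p) + ((q:ℤ):ℝ)*(2*Real.pi) := by
      push_cast
      field_simp
      linear_combination hreal
    have hcosab : Real.cos (2*Real.pi*((i:ℕ):ℝ)/p - 2*Real.pi*((j:ℕ):ℝ)/p)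
        = Real.cos (2 * Real.pi * m / p) := by
      rw [hang, Real.cos_add_int_mul_two_pi, Real.cos_neg]
    have expand : (inner ℝ (v i) (v j) : ℝ)
        = N^2 * (Real.cos (2*Real.pi*((i:ℕ):ℝ)/p - 2*Real.pi*((j:ℕ):ℝ)/p) + h^2) := by
      simp [hv, PiLp.inner_apply, RCLike.inner_apply, Fin.sum_univ_three, Real.cos_sub]
      ring
    rw [expand, hcosab, hsq]; ring
  constructor
  · intro i j hij
    rcases hij with h1 | h1
    · exact key i j h1
    · rw [real_inner_comm]; exact key j i h1
  -- Part 2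
  · intro i j k hij hik hjk
    have hNpos : 0 < N := by
      rw [hN]
      have : (0:ℝ) < Real.sqrt (1 + |Real.cos (2 * Real.pi * m / p)|) :=
        Real.sqrt_pos.2 (by positivity)
      positivity
    have hcoslt : Real.cos (2 * Real.pi * m / p) < 0 := by
      rcases lt_or_eq_of_le hcos with h0 | h0
      · exact h0
      · exfalso
        rw [Real.cos_eq_zero_iff] at h0
        obtain ⟨n, hn⟩ := h0
        have hn1 : (1:ℝ) ≤ 2*(n:ℝ)+1 := by nlinarith [hm1, hn]
        have hn2 : (2:ℝ)*(n:ℝ)+1 ≤ 2 := by nlinarith [hm2, hn]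
        have hn0 : n = 0 := by
          have h1' : (1:ℤ) ≤ 2*n+1 := by exact_mod_cast hn1
          have h2' : (2:ℤ)*n+1 ≤ 2 := by exact_mod_cast hn2
          omega
        rw [hn0] at hn
        push_cast at hn
        have h4m : ((4*m : ℕ):ℝ) = (p:ℝ) := by
          push_cast
          have : 2 * Real.pi * m * 2 = p * ((2*0+1) * Real.pi) := by
            field_simp at hn
            linear_combination Real.pi * hn
          nlinarith [this, hπpos]
        have : 4*m = p := by exact_mod_cast h4m
        omega
    have hhpos : 0 < h := by
      rw [hh]; exact Real.sqrt_pos.2 (by linarith)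
    set a : ℝ := 2*Real.pi*((i:ℕ):ℝ)/p with ha
    set b : ℝ := 2*Real.pi*((j:ℕ):ℝ)/p with hb
    set c : ℝ := 2*Real.pi*((k:ℕ):ℝ)/p with hc
    set u1 : ℝ := Real.pi*(((j:ℕ):ℝ) - ((i:ℕ):ℝ))/p with hu1
    set u2 : ℝ := Real.pi*(((k:ℕ):ℝ) - ((j:ℕ):ℝ))/p with hu2
    have e1 : b - a = 2*u1 := by rw [ha, hb, hu1]; ring
    have e2 : c - b = 2*u2 := by rw [hb, hc, hu2]; ring
    have e3 : c - a = 2*u1 + 2*u2 := by rw [ha, hc, hu1, hu2]; ring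
    have hdet0 := det3_aux N h a b c
    rw [e1, e2, e3, trig_aux] at hdet0
    have hs1 : Real.sin u1 ≠ 0 := by
      have : u1 = Real.pi * (((j:ℤ) - (i:ℤ)):ℤ) / p := by rw [hu1]; push_cast; ring
      rw [this]
      apply sin_ne_aux p hppos
      · have : (i:ℕ) ≠ (j:ℕ) := fun hcon => hij (Fin.ext hcon)
        omega
      · have := i.isLt; have := j.isLt; omega
    have hs2 : Real.sin u2 ≠ 0 := by
      have : u2 = Real.pi * (((k:ℤ) - (j:ℤ)):ℤ) / p := by rw [hu2]; push_cast; ring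
      rw [this]
      apply sin_ne_aux p hppos
      · have : (j:ℕ) ≠ (k:ℕ) := fun hcon => hjk (Fin.ext hcon)
        omega
      · have := j.isLt; have := k.isLt; omega
    have hs3 : Real.sin (u1 + u2) ≠ 0 := by
      have : u1 + u2 = Real.pi * (((k:ℤ) - (i:ℤ)):ℤ) / p := by rw [hu1, hu2]; push_cast; ring
      rw [this]
      apply sin_ne_aux p hppos
      · have : (i:ℕ) ≠ (k:ℕ) := fun hcon => hik (Fin.ext hcon)
        omega
      · have := i.isLt; have := k.isLt; omega
    have hdetne : Matrix.det (Matrix.of ![![N*Real.cos a, N*Real.sin a, N*h],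
        ![N*Real.cos b, N*Real.sin b, N*h], ![N*Real.cos c, N*Real.sin c, N*h]]) ≠ 0 := by
      rw [hdet0]
      have : N^3 ≠ 0 := by positivity
      positivity
    have hli : LinearIndependent ℝ (fun r => (Matrix.of ![![N*Real.cos a, N*Real.sin a, N*h],
        ![N*Real.cos b, N*Real.sin b, N*h], ![N*Real.cos c, N*Real.sin c, N*h]]) r) :=
      Matrix.linearIndependent_rows_iff_isUnit.2
        ((Matrix.isUnit_iff_isUnit_det _).2 (isUnit_iff_ne_zero.2 hdetne))
    have hw : ∀ r : Fin 3, (![v i, v j, v k] : Fin 3 → EuclideanSpace ℝ (Fin 3)) r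
        = WithLp.toLp 2 ((Matrix.of ![![N*Real.cos a, N*Real.sin a, N*h],
        ![N*Real.cos b, N*Real.sin b, N*h], ![N*Real.cos c, N*Real.sin c, N*h]]) r) := by
      intro r
      fin_cases r
      · exact WithLp.ofLp_injective 2 ((hv i).trans rfl)
      · exact WithLp.ofLp_injective 2 ((hv j).trans rfl)
      · exact WithLp.ofLp_injective 2 ((hv k).trans rfl)
    rw [show (![v i, v j, v k] : Fin 3 → EuclideanSpace ℝ (Fin 3))
        = (fun r => WithLp.toLp 2 ((Matrix.of ![![N*Real.cos a, N*Real.sin a, N*h],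
        ![N*Real.cos b, N*Real.sin b, N*h], ![N*Real.cos c, N*Real.sin c, N*h]]) r))
        from funext hw]
    exact hli.map' (WithLp.linearEquiv 2 ℝ (Fin 3 → ℝ)).symm.toLinearMap (LinearEquiv.ker _)
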